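/- Let $(X_1,\dots,X_N)$ be a $T_N$-configuration in $\mathbb{M}^{p\times q}$, i.e. there exist matrices $P, C_1,\dots,C_N$ with $\operatorname{rank}(C_j)=1$, $\sum_{j=1}^N C_j = 0$, and reals $\kappa_j>1$ such that $X_j = P + C_1 + \dots + C_{j-1} + \kappa_j C_j$ for each $j$. Set $P_1=P$ and $P_j = P + C_1 + \dots + C_{j-1}$. Then for every rank-one convex function $g\colon \mathbb{M}^{p\times q}\to\mathbb{R}$ with $g\ge 0$ and $g(X_j)=0$ for all $j$, one has $g(P_j)=0$ for all $j=1,\dots,N$. -/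

import Mathlib

/-- A function on `p × q` real matrices is rank-one convex if it is convex along
every rank-one direction. -/
def RankOneConvex {p q : ℕ} (g : Matrix (Fin p) (Fin q) ℝ → ℝ) : Prop :=
  ∀ X Y : Matrix (Fin p) (Fin q) ℝ, Matrix.rank Y = 1 →
    ConvexOn ℝ Set.univ (fun t : ℝ => g (X + t • Y))

/-- In a `T_N`-configuration, every nonnegative rank-one convex function vanishing
on the `X_j`'s also vanishes at all the base points `P_j`. -/
theorem stmt0 {p q N : ℕ}
    (P : Matrix (Fin p) (Fin q) ℝ) (C : Fin N → Matrix (Fin p) (Fin q) ℝ)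
    (κ : Fin N → ℝ)
    (hC : ∀ j, Matrix.rank (C j) = 1) (hsum : ∑ j, C j = 0) (hκ : ∀ j, 1 < κ j)
    (X Pm : Fin N → Matrix (Fin p) (Fin q) ℝ)
    (hPm : ∀ j, Pm j = P + ∑ i ∈ Finset.univ.filter (fun i => i < j), C i)
    (hX : ∀ j, X j = Pm j + κ j • C j)
    (g : Matrix (Fin p) (Fin q) ℝ → ℝ)
    (hg : RankOneConvex g) (hg0 : ∀ Z, 0 ≤ g Z) (hgX : ∀ j, g (X j) = 0) :
    ∀ j, g (Pm j) = 0 := by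
  rcases Nat.eq_zero_or_pos N with rfl | hN
  · exact fun j => j.elim0
  haveI : NeZero N := ⟨hN.ne'⟩
  have hPm' : ∀ j : Fin N, Pm j = P + ∑ i ∈ Finset.Iio j, C i := by
    intro j
    have hf : Finset.filter (fun i => i < j) Finset.univ = Finset.Iio j := by
      ext i; simp
    rw [hPm, hf]
  -- step: Pm (j+1) = Pm j + C j
  have hstep : ∀ j : Fin N, Pm (j + 1) = Pm j + C j := by
    intro j
    rcases lt_or_eq_of_le (Nat.succ_le_of_lt j.isLt) with h | h
    · -- no wrap
      have h1v : ((1 : Fin N) : ℕ) = 1 := by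
        rw [Fin.val_one']; exact Nat.mod_eq_of_lt (by omega)
      have hv : ((j + 1 : Fin N) : ℕ) = (j : ℕ) + 1 := by
        rw [Fin.val_add, h1v, Nat.mod_eq_of_lt h]
      have hIio : Finset.Iio (j + 1) = insert j (Finset.Iio j) := by
        ext i
        simp only [Finset.mem_Iio, Finset.mem_insert, Fin.lt_def, hv, Fin.ext_iff]
        omega
      rw [hPm', hPm', hIio, Finset.sum_insert (by simp)]
      abel
    · -- wrap around: j is the last index
      have hj1 : j + 1 = 0 := by
        apply Fin.ext
        rw [Fin.val_add, Fin.val_zero, Fin.val_one']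
        conv_lhs => rw [← Nat.mod_eq_of_lt j.isLt]
        rw [Nat.succ_eq_add_one] at h
        rw [← Nat.add_mod, h, Nat.mod_self]
      have huniv : (Finset.univ : Finset (Fin N)) = insert j (Finset.Iio j) := by
        ext i
        simp only [Finset.mem_univ, Finset.mem_insert, Finset.mem_Iio, Fin.lt_def,
          Fin.ext_iff, true_iff]
        have := i.isLt
        omega
      have hz : C j + ∑ i ∈ Finset.Iio j, C i = 0 := by
        rw [← Finset.sum_insert (by simp : j ∉ Finset.Iio j), ← huniv, hsum]
      rw [hj1, hPm', hPm']
      have h0 : Finset.Iio (0 : Fin N) = ∅ := by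
        ext i; simp
      rw [h0, Finset.sum_empty]
      rw [add_assoc, add_comm (∑ i ∈ Finset.Iio j, C i) (C j), hz, add_zero]
  -- key inequality from rank-one convexity
  have key : ∀ j : Fin N, g (Pm (j + 1)) ≤ (1 - 1 / κ j) * g (Pm j) := by
    intro j
    have hconv := hg (Pm j) (C j) (hC j)
    have hκj := hκ j
    have hκpos : (0 : ℝ) < κ j := by linarith
    have ha : (0 : ℝ) ≤ 1 / κ j := by positivity
    have hb : (0 : ℝ) ≤ 1 - 1 / κ j := by
      have : 1 / κ j < 1 := by
        rw [div_lt_one hκpos]; linarith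
      linarith
    have hab : 1 / κ j + (1 - 1 / κ j) = 1 := by ring
    have := hconv.2 (Set.mem_univ (κ j)) (Set.mem_univ (0 : ℝ)) ha hb hab
    simp only [smul_eq_mul, mul_zero, add_zero] at this
    have hx : (1 / κ j) * κ j = 1 := by field_simp
    rw [hx] at this
    have e1 : Pm j + (1 : ℝ) • C j = Pm (j + 1) := by
      rw [one_smul, hstep]
    have e2 : Pm j + κ j • C j = X j := (hX j).symm
    have e3 : Pm j + (0 : ℝ) • C j = Pm j := by rw [zero_smul, add_zero]
    rw [e1, e2, e3, hgX j, mul_zero, zero_add] at this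
    exact this
  -- monotonicity around the cycle
  set a : Fin N → ℝ := fun j => g (Pm j) with ha
  have hmono : ∀ j : Fin N, a (j + 1) ≤ a j := by
    intro j
    have h1 := key j
    have h2 := hg0 (Pm j)
    have hκj := hκ j
    have : (1 - 1 / κ j) * g (Pm j) ≤ 1 * g (Pm j) := by
      apply mul_le_mul_of_nonneg_right _ h2
      have : 0 < 1 / κ j := by positivity
      linarith
    simp only [one_mul] at this
    exact h1.trans this
  open Fin.NatCast in
  have hiter : ∀ (k : ℕ) (j : Fin N), a (j + (k : Fin N)) ≤ a j := by
    intro k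
    induction k with
    | zero => intro j; simp
    | succ n ih =>
      intro j
      have : (((n + 1 : ℕ)) : Fin N) = (n : Fin N) + 1 := by push_cast; ring
      rw [this, ← add_assoc]
      calc a (j + (n : Fin N) + 1) ≤ a (j + (n : Fin N)) := hmono _
        _ ≤ a j := ih j
  open Fin.NatCast in
  have hall : ∀ j : Fin N, a j = a 0 := by
    intro j
    have h1 : a j ≤ a 0 := by
      have := hiter (j : ℕ) 0
      rwa [zero_add, Fin.cast_val_eq_self] at this
    have h2 : a 0 ≤ a j := by
      have := hiter ((0 - j : Fin N) : ℕ) j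
      rwa [Fin.cast_val_eq_self, add_sub_cancel] at this
    linarith
  -- conclude a 0 = 0
  have h00 : a 0 = 0 := by
    have h1 := key 0
    have h2 : a (0 + 1) = a 0 := hall (0 + 1)
    have h3 : (0 : ℝ) ≤ a 0 := hg0 _
    have hκ0 := hκ 0
    have hκpos : (0 : ℝ) < κ 0 := by linarith
    have h4 : 0 < 1 / κ 0 := by positivity
    have h5 : a (0 + 1) ≤ (1 - 1 / κ 0) * a 0 := h1
    rw [h2] at h5
    nlinarith
  intro j
  exact (hall j).trans h00
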